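/- For all integers b ≥ 1, m ≥ 1 and all odd integers a with 1 ≤ a ≤ 2m−1, set 2n = 2m + 2ab and p = [(2m)(a)^{2b}]. Then the partition e = [(2m)(a+1)(a)^{2b-2}(a-1)] is the Sp_{2n}-expansion of p; that is, e is a special symplectic partition of 2n, p ≤ e in the dominance order, and every special symplectic partition of 2n that is ≥ p in the dominance order is ≥ e in the dominance order. -/

import Mathlib

namespace JLFourier

/-- The partition whose parts (indexed from `0`) are the entries of the list `l`
(entries beyond the list, and zero entries, count as absent parts). -/
def ofList (l : List ℕ) : ℕ → ℕ := fun i => l.getD i 0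

/-- The transpose of a partition `p`: its `k`-th part (indexed from `0`) is the
number of parts of `p` that are at least `k + 1`. -/
noncomputable def transpose (p : ℕ → ℕ) : ℕ → ℕ := fun k => {i | k + 1 ≤ p i}.ncard

/-- `p` is a partition of `N`: a weakly decreasing, eventually zero function
`ℕ → ℕ` (listing the parts in decreasing order, indexed from `0`) with sum `N`. -/
def IsPartition (p : ℕ → ℕ) (N : ℕ) : Prop :=
  Antitone p ∧ ∃ n, (∀ i, n ≤ i → p i = 0) ∧ ∑ i ∈ Finset.range n, p i = N

/-- The multiplicity of `d` as a part of `p`. -/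
noncomputable def mult (p : ℕ → ℕ) (d : ℕ) : ℕ := {i | p i = d}.ncard

/-- A symplectic partition of `N`: every odd part occurs with even multiplicity. -/
def IsSymplectic (p : ℕ → ℕ) (N : ℕ) : Prop :=
  IsPartition p N ∧ ∀ d, Odd d → Even (mult p d)

/-- A special symplectic partition: a symplectic partition whose transpose is
also a symplectic partition. -/
def IsSpecialSymplectic (p : ℕ → ℕ) (N : ℕ) : Prop :=
  IsSymplectic p N ∧ IsSymplectic (transpose p) N

/-- An orthogonal partition of `N`: every (positive) even part occurs with even
multiplicity. -/
def IsOrthogonal (p : ℕ → ℕ) (N : ℕ) : Prop :=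
  IsPartition p N ∧ ∀ d, 0 < d → Even d → Even (mult p d)

/-- A special orthogonal partition: an orthogonal partition whose transpose is
also an orthogonal partition. -/
def IsSpecialOrthogonal (p : ℕ → ℕ) (N : ℕ) : Prop :=
  IsOrthogonal p N ∧ IsOrthogonal (transpose p) N

/-- Dominance order: `DomLE p q` means `p ≤ q`, i.e. for every `k` the sum of the
`k` largest parts of `p` is at most the sum of the `k` largest parts of `q`. -/
def DomLE (p q : ℕ → ℕ) : Prop :=
  ∀ k, ∑ i ∈ Finset.range k, p i ≤ ∑ i ∈ Finset.range k, q i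


/-! ### Auxiliary definitions and lemmas -/

/-- explicit form of the partition `e = [(2m)(a+1)(a)^(2b-2)(a-1)]` as a function -/
def efun (a b m : ℕ) : ℕ → ℕ := fun i =>
  if i = 0 then 2*m else if i = 1 then a+1 else if i ≤ 2*b-1 then a
  else if i = 2*b then a-1 else 0

/-- explicit form of the partition `p = [(2m)(a)^(2b)]` as a function -/
def pfun (a b m : ℕ) : ℕ → ℕ := fun i =>
  if i = 0 then 2*m else if i ≤ 2*b then a else 0

/-- explicit form of the transpose of `e` as a function -/
def tfun (a b m : ℕ) : ℕ → ℕ := fun k =>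
  if k < a-1 then 2*b+1 else if k = a-1 then 2*b else if k = a then 2
  else if k < 2*m then 1 else 0

lemma getD_split (l1 l2 : List ℕ) (j : ℕ) :
    (l1 ++ l2).getD j 0 = if j < l1.length then l1.getD j 0 else l2.getD (j - l1.length) 0 := by
  rw [List.getD_eq_getElem?_getD, List.getD_eq_getElem?_getD, List.getD_eq_getElem?_getD,
    List.getElem?_append]
  split <;> rfl

lemma getD_rep (n x j : ℕ) : (List.replicate n x).getD j 0 = if j < n then x else 0 := by
  rw [List.getD_eq_getElem?_getD, List.getElem?_replicate]
  split <;> simp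

lemma ofList_p (a b m : ℕ) : ofList (2 * m :: List.replicate (2 * b) a) = pfun a b m := by
  funext i
  match i with
  | 0 => rfl
  | (j+1) =>
    show (List.replicate (2*b) a).getD j 0 = _
    rw [getD_rep]
    simp only [pfun]
    split_ifs <;> first | contradiction | omega

lemma getD_rep_snoc (n x y j : ℕ) :
    (List.replicate n x ++ [y]).getD j 0 = if j < n then x else if j = n then y else 0 := by
  rw [getD_split]
  simp only [List.length_replicate]
  by_cases h1 : j < n
  · simp [h1, getD_rep]
  · rw [if_neg h1, if_neg h1]
    by_cases h2 : j = n
    · subst h2; simp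
    · rw [if_neg h2]
      obtain ⟨k, hk⟩ : ∃ k, j - n = k + 1 := ⟨j-n-1, by omega⟩
      rw [hk]
      rfl

lemma ofList_e (a b m : ℕ) (hb : 1 ≤ b) :
    ofList ([2 * m, a + 1] ++ List.replicate (2 * b - 2) a ++ [a - 1]) = efun a b m := by
  funext i
  match i with
  | 0 => rfl
  | 1 => rfl
  | (j+2) =>
    show ((List.replicate (2*b-2) a ++ [a-1]).getD j 0) = _
    rw [getD_rep_snoc]
    simp only [efun]
    split_ifs <;> first | contradiction | omega

lemma ncard_setle {q : ℕ → ℕ} {c t : ℕ} (h : ∀ i, c ≤ q i ↔ i < t) :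
    {i | c ≤ q i}.ncard = t := by
  have hs : {i | c ≤ q i} = Set.Iio t := Set.ext fun i => h i
  rw [hs, ← Finset.coe_range, Set.ncard_coe_finset, Finset.card_range]

lemma mult_eq_of_iff {q : ℕ → ℕ} {d s t : ℕ} (h : ∀ i, q i = d ↔ s ≤ i ∧ i < t) :
    mult q d = t - s := by
  have hs : {i | q i = d} = Set.Ico s t := Set.ext fun i => by simpa using h i
  rw [mult, hs, ← Finset.coe_Ico, Set.ncard_coe_finset, Nat.card_Ico]

lemma exists_thr {q : ℕ → ℕ} (hq : Antitone q) {c : ℕ} (hex : ∃ n, q n < c) :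
    ∃ t, ∀ i, c ≤ q i ↔ i < t := by
  refine ⟨Nat.find hex, fun i => ⟨fun h => ?_, fun h => ?_⟩⟩
  · by_contra hc
    push_neg at hc
    have h2 := hq hc
    have h3 := Nat.find_spec hex
    omega
  · have := Nat.find_min hex h
    omega

lemma transpose_ge_iff {q : ℕ → ℕ} (hq : Antitone q) {n0 : ℕ}
    (h0 : ∀ i, n0 ≤ i → q i = 0) (k v : ℕ) (hv : 1 ≤ v) :
    v ≤ transpose q k ↔ k < q (v - 1) := by
  obtain ⟨t, ht⟩ := exists_thr hq (c := k+1) ⟨n0, by rw [h0 n0 le_rfl]; omega⟩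
  have h1 : transpose q k = t := by simp only [transpose]; exact ncard_setle ht
  rw [h1]
  constructor
  · intro hvt
    have h2 := (ht (v-1)).mpr (by omega)
    omega
  · intro hkv
    have h2 := (ht (v-1)).mp (by omega)
    omega

lemma mult_transpose {q : ℕ → ℕ} (hq : Antitone q) {n0 : ℕ}
    (h0 : ∀ i, n0 ≤ i → q i = 0) (v : ℕ) (hv : 1 ≤ v) :
    mult (transpose q) v = q (v - 1) - q v := by
  apply mult_eq_of_iff
  intro k
  have h1 := transpose_ge_iff hq h0 k v hv
  have h2 := transpose_ge_iff hq h0 k (v+1) (by omega)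
  simp only [Nat.add_sub_cancel] at h2
  constructor
  · intro h
    refine ⟨?_, h1.mp (by omega)⟩
    by_contra hc
    push_neg at hc
    have := h2.mpr hc
    omega
  · rintro ⟨hs, htle⟩
    have hA := h1.mpr htle
    have hB : ¬ (v+1 ≤ transpose q k) := fun hh => by have := h2.mp hh; omega
    omega

lemma even_partial {q : ℕ → ℕ} {N : ℕ} (hq : IsSpecialSymplectic q N) (j : ℕ) :
    (∑ i ∈ Finset.range (2*j), q i) % 2 = 0 := by
  obtain ⟨⟨⟨hmono, n0, h0, _⟩, _⟩, ⟨_, hT⟩⟩ := hq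
  induction j with
  | zero => simp
  | succ j ih =>
    have hpair := hT (2*j+1) ⟨j, by omega⟩
    have hm := mult_transpose hmono h0 (2*j+1) (by omega)
    rw [hm] at hpair
    have hle : q (2*j+1) ≤ q (2*j) := hmono (by omega)
    rw [Nat.even_iff] at hpair
    simp only [Nat.add_sub_cancel] at hpair
    have h1 : 2*(j+1) = (2*j + 1) + 1 := by omega
    rw [h1, Finset.sum_range_succ, Finset.sum_range_succ]
    omega

/-! ### facts about `efun`, `pfun`, `tfun` -/

section funs
variable {a b m : ℕ}

lemma efun_anti (hm : 1 ≤ m) (ha1 : 1 ≤ a) (ha2 : a ≤ 2*m-1) : Antitone (efun a b m) := by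
  intro i j hij
  simp only [efun]
  split_ifs <;> first | contradiction | omega

lemma efun_zero (hb : 1 ≤ b) (i : ℕ) (hi : 2*b+1 ≤ i) : efun a b m i = 0 := by
  simp only [efun]; split_ifs <;> first | contradiction | omega

lemma pfun_anti (hm : 1 ≤ m) (ha2 : a ≤ 2*m-1) : Antitone (pfun a b m) := by
  intro i j hij
  simp only [pfun]
  split_ifs <;> first | contradiction | omega

lemma tfun_anti (hb : 1 ≤ b) : Antitone (tfun a b m) := by
  intro i j hij
  simp only [tfun]
  split_ifs <;> first | contradiction | omega

lemma tfun_zero (hm : 1 ≤ m) (ha2 : a ≤ 2*m-1) (k : ℕ) (hk : 2*m ≤ k) : tfun a b m k = 0 := by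
  simp only [tfun]; split_ifs <;> first | contradiction | omega

lemma sum_efun (hb : 1 ≤ b) (ha1 : 1 ≤ a) :
    ∑ i ∈ Finset.range (2*b+1), efun a b m i = 2*m + 2*a*b := by
  rw [Finset.sum_range_succ]
  have h1 : ∑ i ∈ Finset.range (2*b), efun a b m i
      = ∑ i ∈ Finset.range 2, efun a b m i + ∑ i ∈ Finset.Ico 2 (2*b), efun a b m i := by
    rw [Finset.range_eq_Ico, Finset.range_eq_Ico, Finset.sum_Ico_consecutive]
    · omega
    · omega
  have h2 : ∑ i ∈ Finset.Ico 2 (2*b), efun a b m i = (2*b-2) * a := by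
    rw [Finset.sum_congr rfl (g := fun _ => a) (fun i hi => by
      simp only [Finset.mem_Ico] at hi
      simp only [efun]; split_ifs <;> first | contradiction | omega)]
    rw [Finset.sum_const, Nat.card_Ico, smul_eq_mul]
  rw [h1, h2]
  have h3 : ∑ i ∈ Finset.range 2, efun a b m i = 2*m + (a+1) := by
    simp [Finset.sum_range_succ, efun]
  rw [h3]
  have h4 : efun a b m (2*b) = a - 1 := by
    simp only [efun]; split_ifs <;> first | contradiction | omega
  rw [h4]
  obtain ⟨b', rfl⟩ : ∃ b', b = b'+1 := ⟨b-1, by omega⟩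
  have h5 : 2*(b'+1) - 2 = 2*b' := by omega
  rw [h5]
  have h6 : 2*b'*a = 2*(b'*a) := by ring
  have h7 : 2*a*(b'+1) = 2*(b'*a) + 2*a := by ring
  omega

lemma sum_tfun (hb : 1 ≤ b) (hm : 1 ≤ m) (ha1 : 1 ≤ a) (ha2 : a ≤ 2*m-1) :
    ∑ k ∈ Finset.range (2*m), tfun a b m k = 2*m + 2*a*b := by
  have hsplit1 : ∑ k ∈ Finset.Ico 0 (a-1), tfun a b m k + ∑ k ∈ Finset.Ico (a-1) (a+1), tfun a b m k
      = ∑ k ∈ Finset.Ico 0 (a+1), tfun a b m k :=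
    Finset.sum_Ico_consecutive _ (by omega) (by omega)
  have hsplit2 : ∑ k ∈ Finset.Ico 0 (a+1), tfun a b m k + ∑ k ∈ Finset.Ico (a+1) (2*m), tfun a b m k
      = ∑ k ∈ Finset.Ico 0 (2*m), tfun a b m k :=
    Finset.sum_Ico_consecutive _ (by omega) (by omega)
  have e1 : ∑ k ∈ Finset.Ico 0 (a-1), tfun a b m k = (a-1) * (2*b+1) := by
    rw [Finset.sum_congr rfl (g := fun _ => 2*b+1) (fun k hk => by
      simp only [Finset.mem_Ico] at hk
      simp only [tfun]; split_ifs <;> first | contradiction | omega)]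
    rw [Finset.sum_const, Nat.card_Ico, smul_eq_mul, Nat.sub_zero]
  have e2 : ∑ k ∈ Finset.Ico (a-1) (a+1), tfun a b m k = 2*b + 2 := by
    have hia : a + 1 = (a-1) + 1 + 1 := by omega
    rw [hia, Finset.sum_Ico_succ_top (by omega), Finset.sum_Ico_succ_top (by omega)]
    have hz : Finset.Ico (a-1) (a-1) = ∅ := by simp
    rw [hz]
    have v1 : tfun a b m (a-1) = 2*b := by simp only [tfun]; split_ifs <;> first | contradiction | omega
    have v2 : tfun a b m (a-1+1) = 2 := by simp only [tfun]; split_ifs <;> first | contradiction | omega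
    rw [v1, v2]
    simp
  have e3 : ∑ k ∈ Finset.Ico (a+1) (2*m), tfun a b m k = 2*m - (a+1) := by
    rw [Finset.sum_congr rfl (g := fun _ => 1) (fun k hk => by
      simp only [Finset.mem_Ico] at hk
      simp only [tfun]; split_ifs <;> first | contradiction | omega)]
    rw [Finset.sum_const, Nat.card_Ico, smul_eq_mul, mul_one]
  rw [Finset.range_eq_Ico, ← hsplit2, ← hsplit1, e1, e2, e3]
  obtain ⟨a', rfl⟩ : ∃ a', a = a'+1 := ⟨a-1, by omega⟩
  have h5 : a'+1-1 = a' := by omega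
  rw [h5]
  have h6 : a' * (2*b+1) = 2*(a'*b) + a' := by ring
  have h7 : 2*(a'+1)*b = 2*(a'*b) + 2*b := by ring
  omega

lemma transpose_efun (hb : 1 ≤ b) (hm : 1 ≤ m) (ha1 : 1 ≤ a) (ha2 : a ≤ 2*m-1) :
    transpose (efun a b m) = tfun a b m := by
  funext k
  have key : ∀ t, (∀ i, k+1 ≤ efun a b m i ↔ i < t) → transpose (efun a b m) k = t :=
    fun t ht => by simp only [transpose]; exact ncard_setle ht
  by_cases h1 : k + 1 ≤ a - 1
  · rw [key (2*b+1) (by intro i; simp only [efun]; split_ifs <;> first | contradiction | omega)]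
    simp only [tfun]; split_ifs <;> first | contradiction | omega
  · by_cases h2 : k = a - 1
    · rw [key (2*b) (by intro i; simp only [efun]; split_ifs <;> first | contradiction | omega)]
      simp only [tfun]; split_ifs <;> first | contradiction | omega
    · by_cases h3 : k = a
      · rw [key 2 (by intro i; simp only [efun]; split_ifs <;> first | contradiction | omega)]
        simp only [tfun]; split_ifs <;> first | contradiction | omega
      · by_cases h4 : k < 2*m
        · rw [key 1 (by intro i; simp only [efun]; split_ifs <;> first | contradiction | omega)]
          simp only [tfun]; split_ifs <;> first | contradiction | omega
        · rw [key 0 (by intro i; simp only [efun]; split_ifs <;> first | contradiction | omega)]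
          simp only [tfun]; split_ifs <;> first | contradiction | omega

lemma mult_efun_odd (hb : 1 ≤ b) (hm : 1 ≤ m) (ha1 : 1 ≤ a) (ha2 : a ≤ 2*m-1)
    (haodd : a % 2 = 1) (d : ℕ) (hd : d % 2 = 1) : Even (mult (efun a b m) d) := by
  by_cases hda : d = a
  · have := mult_eq_of_iff (q := efun a b m) (d := d) (s := 2) (t := 2*b)
      (by intro i; simp only [efun]; split_ifs <;> first | contradiction | omega)
    rw [this, Nat.even_iff]; omega
  · have := mult_eq_of_iff (q := efun a b m) (d := d) (s := 0) (t := 0)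
      (by intro i; simp only [efun]; split_ifs <;> first | contradiction | omega)
    rw [this]; simp

lemma mult_tfun_odd (hb : 1 ≤ b) (hm : 1 ≤ m) (ha1 : 1 ≤ a) (ha2 : a ≤ 2*m-1)
    (haodd : a % 2 = 1) (d : ℕ) (hd : d % 2 = 1) : Even (mult (tfun a b m) d) := by
  by_cases hd1 : d = 2*b+1
  · have := mult_eq_of_iff (q := tfun a b m) (d := d) (s := 0) (t := a-1)
      (by intro k; simp only [tfun]; split_ifs <;> first | contradiction | omega)
    rw [this, Nat.even_iff]; omega
  · by_cases hd2 : d = 1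
    · have := mult_eq_of_iff (q := tfun a b m) (d := d) (s := a+1) (t := 2*m)
        (by intro k; simp only [tfun]; split_ifs <;> first | contradiction | omega)
      rw [this, Nat.even_iff]; omega
    · have := mult_eq_of_iff (q := tfun a b m) (d := d) (s := 0) (t := 0)
        (by intro k; simp only [tfun]; split_ifs <;> first | contradiction | omega)
      rw [this]; simp

/-! ### partial sums -/

lemma sum_p (hb : 1 ≤ b) (k : ℕ) (hk1 : 1 ≤ k) (hk2 : k ≤ 2*b+1) :
    ∑ i ∈ Finset.range k, pfun a b m i = 2*m + (k-1)*a := by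
  induction k with
  | zero => omega
  | succ n ih =>
    rcases Nat.eq_zero_or_pos n with hn | hn
    · subst hn
      simp [pfun]
    · rw [Finset.sum_range_succ, ih hn (by omega)]
      have hpn : pfun a b m n = a := by simp only [pfun]; split_ifs <;> first | contradiction | omega
      rw [hpn]
      obtain ⟨n', rfl⟩ : ∃ n', n = n'+1 := ⟨n-1, by omega⟩
      have h1 : n'+1-1 = n' := by omega
      have h2 : n'+1+1-1 = n'+1 := by omega
      rw [h1, h2]
      have h3 : (n'+1)*a = n'*a + a := by ring
      omega

lemma sum_p_hi (hb : 1 ≤ b) (k : ℕ) (hk : 2*b+1 ≤ k) :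
    ∑ i ∈ Finset.range k, pfun a b m i = 2*m + 2*a*b := by
  induction k with
  | zero => omega
  | succ n ih =>
    rcases Nat.lt_or_ge n (2*b+1) with hn | hn
    · have hn' : n = 2*b := by omega
      subst hn'
      rw [Finset.sum_range_succ, sum_p hb (2*b) (by omega) (by omega)]
      have hpn : pfun a b m (2*b) = a := by simp only [pfun]; split_ifs <;> first | contradiction | omega
      rw [hpn]
      have h1 : (2*b-1)*a + a = 2*a*b := by
        obtain ⟨b', rfl⟩ : ∃ b', b = b'+1 := ⟨b-1, by omega⟩
        have h2 : 2*(b'+1)-1 = 2*b'+1 := by omega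
        rw [h2]
        have h3 : (2*b'+1)*a = 2*(b'*a) + a := by ring
        have h4 : 2*a*(b'+1) = 2*(b'*a) + 2*a := by ring
        omega
      omega
    · rw [Finset.sum_range_succ, ih hn]
      have hpn : pfun a b m n = 0 := by simp only [pfun]; split_ifs <;> first | contradiction | omega
      omega

lemma sum_e_mid (hb : 1 ≤ b) (ha1 : 1 ≤ a) (k : ℕ) (hk1 : 2 ≤ k) (hk2 : k ≤ 2*b) :
    ∑ i ∈ Finset.range k, efun a b m i = 2*m + (k-1)*a + 1 := by
  induction k with
  | zero => omega
  | succ n ih =>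
    rcases Nat.lt_or_ge n 2 with hn | hn
    · have hn' : n = 1 := by omega
      subst hn'
      simp [Finset.sum_range_succ, efun]
      omega
    · rw [Finset.sum_range_succ, ih hn (by omega)]
      have hpn : efun a b m n = a := by simp only [efun]; split_ifs <;> first | contradiction | omega
      rw [hpn]
      obtain ⟨n', rfl⟩ : ∃ n', n = n'+1 := ⟨n-1, by omega⟩
      have h1 : n'+1-1 = n' := by omega
      have h2 : n'+1+1-1 = n'+1 := by omega
      rw [h1, h2]
      have h3 : (n'+1)*a = n'*a + a := by ring
      omega

lemma sum_e_hi (hb : 1 ≤ b) (ha1 : 1 ≤ a) (k : ℕ) (hk : 2*b+1 ≤ k) :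
    ∑ i ∈ Finset.range k, efun a b m i = 2*m + 2*a*b := by
  induction k with
  | zero => omega
  | succ n ih =>
    rcases Nat.lt_or_ge n (2*b+1) with hn | hn
    · have hn' : n = 2*b := by omega
      subst hn'
      exact sum_efun hb ha1
    · rw [Finset.sum_range_succ, ih hn, efun_zero hb n hn]
      omega

end funs


theorem stmt8 (a b m : ℕ) (hb : 1 ≤ b) (hm : 1 ≤ m) (haodd : Odd a)
    (ha1 : 1 ≤ a) (ha2 : a ≤ 2 * m - 1) :
    IsSpecialSymplectic (ofList ([2 * m, a + 1] ++ List.replicate (2 * b - 2) a ++ [a - 1])) (2 * m + 2 * a * b) ∧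
    DomLE (ofList (2 * m :: List.replicate (2 * b) a))
      (ofList ([2 * m, a + 1] ++ List.replicate (2 * b - 2) a ++ [a - 1])) ∧
    ∀ e : ℕ → ℕ, IsSpecialSymplectic e (2 * m + 2 * a * b) →
      DomLE (ofList (2 * m :: List.replicate (2 * b) a)) e →
      DomLE (ofList ([2 * m, a + 1] ++ List.replicate (2 * b - 2) a ++ [a - 1])) e := by
  have haodd' : a % 2 = 1 := Nat.odd_iff.mp haodd
  rw [ofList_e a b m hb, ofList_p a b m]
  refine ⟨⟨⟨⟨efun_anti hm ha1 ha2, 2*b+1, fun i hi => efun_zero hb i hi, sum_efun hb ha1⟩,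
      fun d hd => mult_efun_odd hb hm ha1 ha2 haodd' d (Nat.odd_iff.mp hd)⟩, ?_⟩, ?_, ?_⟩
  · -- transpose of e is symplectic
    rw [transpose_efun hb hm ha1 ha2]
    exact ⟨⟨tfun_anti hb, 2*m, fun k hk => tfun_zero hm ha2 k hk, sum_tfun hb hm ha1 ha2⟩,
      fun d hd => mult_tfun_odd hb hm ha1 ha2 haodd' d (Nat.odd_iff.mp hd)⟩
  · -- p ≤ e
    intro k
    rcases Nat.eq_zero_or_pos k with hk0 | hk0
    · subst hk0; simp
    rcases Nat.lt_or_ge k 2 with hk1 | hk1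
    · have hk : k = 1 := by omega
      subst hk
      rw [Finset.sum_range_one, Finset.sum_range_one]
      have h0 : efun a b m 0 = 2*m := rfl
      have h1 : pfun a b m 0 = 2*m := rfl
      omega
    rcases le_or_gt k (2*b) with hk2 | hk2
    · rw [sum_p hb k (by omega) (by omega), sum_e_mid hb ha1 k hk1 hk2]
      omega
    · rw [sum_p_hi hb k (by omega), sum_e_hi hb ha1 k (by omega)]
  · -- expansion property
    intro q hq hdom
    obtain ⟨⟨⟨hmono, n0, h0, hsum⟩, hsympl⟩, hT⟩ := hq
    have hq' : IsSpecialSymplectic q (2 * m + 2 * a * b) :=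
      ⟨⟨⟨hmono, n0, h0, hsum⟩, hsympl⟩, hT⟩
    have hstrict : ∀ k, 2 ≤ k → k ≤ 2*b →
        2*m + (k-1)*a + 1 ≤ ∑ i ∈ Finset.range k, q i := by
      intro k hk2 hkb
      have hd1 := hdom k
      rw [sum_p hb k (by omega) (by omega)] at hd1
      by_contra hcon
      push_neg at hcon
      have heq : ∑ i ∈ Finset.range k, q i = 2*m + (k-1)*a := by omega
      rcases Nat.even_or_odd k with hke | hko
      · obtain ⟨j, rfl⟩ := hke
        have hj1 : 1 ≤ j := by omega
        have hev := even_partial hq' j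
        have h2j : 2*j = j + j := by omega
        rw [h2j] at hev
        have hoddp : ((j + j - 1)*a) % 2 = 1 :=
          Nat.odd_iff.mp (Odd.mul ⟨j-1, by omega⟩ haodd)
        omega
      · obtain ⟨j, rfl⟩ := hko
        have hj1 : 1 ≤ j := by omega
        have hd0 := hdom (2*j)
        rw [sum_p hb (2*j) (by omega) (by omega)] at hd0
        have hd2 := hdom (2*j+1+1)
        rw [sum_p hb (2*j+1+1) (by omega) (by omega)] at hd2
        have hs1 : ∑ i ∈ Finset.range (2*j+1), q i
            = ∑ i ∈ Finset.range (2*j), q i + q (2*j) := Finset.sum_range_succ _ _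
        have hs2 : ∑ i ∈ Finset.range (2*j+1+1), q i
            = ∑ i ∈ Finset.range (2*j+1), q i + q (2*j+1) := Finset.sum_range_succ _ _
        have hanti : q (2*j+1) ≤ q (2*j) := hmono (by omega)
        have hev := even_partial hq' j
        -- product facts
        obtain ⟨j', rfl⟩ : ∃ j', j = j'+1 := ⟨j-1, by omega⟩
        have e1 : (2*(j'+1)+1-1)*a = 2*((j'+1)*a) := by
          have h : 2*(j'+1)+1-1 = 2*(j'+1) := by omega
          rw [h]; ring
        have e2 : (2*(j'+1)-1)*a + a = 2*((j'+1)*a) := by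
          have h : 2*(j'+1)-1 = 2*j'+1 := by omega
          rw [h]; ring
        have e3 : (2*(j'+1)+1+1-1)*a = 2*((j'+1)*a) + a := by
          have h : 2*(j'+1)+1+1-1 = 2*(j'+1)+1 := by omega
          rw [h]; ring
        omega
    -- conclude DomLE e q
    intro k
    rcases Nat.eq_zero_or_pos k with hk0 | hk0
    · subst hk0; simp
    rcases Nat.lt_or_ge k 2 with hk1 | hk1
    · have hk : k = 1 := by omega
      subst hk
      have := hdom 1
      rw [sum_p hb 1 (by omega) (by omega)] at this
      simp only [Finset.sum_range_one] at this ⊢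
      have h0 : efun a b m 0 = 2*m := rfl
      rw [h0]
      omega
    rcases le_or_gt k (2*b) with hk2 | hk2
    · rw [sum_e_mid hb ha1 k hk1 hk2]
      exact hstrict k hk1 hk2
    · rw [sum_e_hi hb ha1 k (by omega)]
      have := hdom k
      rw [sum_p_hi hb k (by omega)] at this
      exact this


end JLFourier
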